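/- Let c, c' ∈ ℤ^k with S̃_c ≠ ∅ and S̃_{c'} ≠ ∅, and suppose J_c = J_{c'}. Then the minimal face of Z containing π(c) equals the minimal face of Z containing π(c'); i.e., the minimal face corresponding to a Φ-stratum is entirely determined by its set J. -/

import Mathlib

/-- The linear map `φ : ℝⁿ → ℝᵏ` given by pairing with the integer vectors `v j`. -/
noncomputable def phiMap {n k : ℕ} (v : Fin k → Fin n → ℤ) :
    (Fin n → ℝ) →ₗ[ℝ] (Fin k → ℝ) where
  toFun u := fun j => ∑ i, u i * (v j i : ℝ)
  map_add' u w := by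
    funext j
    simp [add_mul, Finset.sum_add_distrib]
  map_smul' r u := by
    funext j
    simp [Finset.mul_sum, mul_assoc]

/-- The map `Φ : ℝⁿ → ℤᵏ`, `Φ(u)_j = ⌈⟨u, v_j⟩⌉`. -/
noncomputable def PhiMap {n k : ℕ} (v : Fin k → Fin n → ℤ) (u : Fin n → ℝ) : Fin k → ℤ :=
  fun j => ⌈∑ i, u i * (v j i : ℝ)⌉

/-- The set `J_c` of indices `j` such that `⟨y, v_j⟩ ∈ ℤ` for every `y` in the lifted stratum
`S̃_c`. -/
noncomputable def Jset {n k : ℕ} (v : Fin k → Fin n → ℤ) (c : Fin k → ℤ) : Set (Fin k) :=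
  {j | ∀ y ∈ {y : Fin n → ℝ | PhiMap v y = c}, ∃ m : ℤ, phiMap v y j = (m : ℝ)}

section Aux

variable {n k : ℕ}

lemma phiMap_apply (v : Fin k → Fin n → ℤ) (y : Fin n → ℝ) (j : Fin k) :
    phiMap v y j = ∑ i, y i * (v j i : ℝ) := rfl

lemma PhiMap_eq_ceil (v : Fin k → Fin n → ℤ) (y : Fin n → ℝ) (j : Fin k) :
    PhiMap v y j = ⌈phiMap v y j⌉ := rfl

lemma phi_mem {v : Fin k → Fin n → ℤ} {y : Fin n → ℝ} {c : Fin k → ℤ}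
    (hy : PhiMap v y = c) (j : Fin k) :
    (c j : ℝ) - 1 < phiMap v y j ∧ phiMap v y j ≤ c j := by
  have h : ⌈phiMap v y j⌉ = c j := by rw [← PhiMap_eq_ceil, hy]
  exact Int.ceil_eq_iff.mp h

lemma phi_int_eq {v : Fin k → Fin n → ℤ} {y : Fin n → ℝ} {c : Fin k → ℤ}
    (hy : PhiMap v y = c) {j : Fin k} (hm : ∃ m : ℤ, phiMap v y j = (m : ℝ)) :
    phiMap v y j = (c j : ℝ) := by
  obtain ⟨m, hm⟩ := hm
  have h : ⌈phiMap v y j⌉ = c j := by rw [← PhiMap_eq_ceil, hy]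
  rw [hm] at h ⊢
  rw [Int.ceil_intCast] at h
  exact_mod_cast h

lemma phi_comb (v : Fin k → Fin n → ℤ) (y w : Fin n → ℝ) (a b : ℝ) (j : Fin k) :
    phiMap v (a • y + b • w) j = a * phiMap v y j + b * phiMap v w j := by
  rw [map_add, map_smul, map_smul]
  simp [Pi.smul_apply, smul_eq_mul]

lemma stratum_convex {v : Fin k → Fin n → ℤ} {y w : Fin n → ℝ} {c : Fin k → ℤ}
    (hy : PhiMap v y = c) (hw : PhiMap v w = c) {t : ℝ} (h0 : 0 ≤ t) (h1 : t ≤ 1) :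
    PhiMap v ((1 - t) • y + t • w) = c := by
  funext j
  have hcomb := phi_comb v y w (1 - t) t j
  have h2 := phi_mem hy j
  have h3 := phi_mem hw j
  rw [PhiMap_eq_ceil, hcomb, Int.ceil_eq_iff]
  have := (convex_Ioc ((c j : ℝ) - 1) (c j)) (x := phiMap v y j) (y := phiMap v w j)
    ⟨h2.1, h2.2⟩ ⟨h3.1, h3.2⟩ (by linarith : (0:ℝ) ≤ 1 - t) h0 (by ring)
  simpa [Set.mem_Ioc, smul_eq_mul] using this

lemma affine_subsingleton {a b r : ℝ} (h : a ≠ r ∨ b ≠ r) :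
    {t : ℝ | (1 - t) * a + t * b = r}.Subsingleton := by
  intro t1 h1 t2 h2
  simp only [Set.mem_setOf_eq] at h1 h2
  have h3 : (t1 - t2) * (b - a) = 0 := by linear_combination h1 - h2
  rcases mul_eq_zero.mp h3 with h4 | h4
  · linarith
  · exfalso
    have hba : b = a := by linarith
    rw [hba] at h1
    have har : a = r := by linear_combination h1
    rcases h with h | h
    · exact h har
    · exact h (hba.trans har)

lemma exists_generic (v : Fin k → Fin n → ℤ) (c : Fin k → ℤ)
    (hc : ({y : Fin n → ℝ | PhiMap v y = c}).Nonempty) :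
    ∃ y, PhiMap v y = c ∧ ∀ j, j ∉ Jset v c → phiMap v y j ≠ (c j : ℝ) := by
  suffices h : ∀ A : Finset (Fin k), ∃ y, PhiMap v y = c ∧
      ∀ j ∈ A, j ∉ Jset v c → phiMap v y j ≠ (c j : ℝ) by
    obtain ⟨y, h1, h2⟩ := h Finset.univ
    exact ⟨y, h1, fun j => h2 j (Finset.mem_univ j)⟩
  intro A
  induction A using Finset.induction with
  | empty =>
    obtain ⟨y, hy⟩ := hc
    exact ⟨y, hy, by simp⟩
  | @insert j0 A hj0A ih =>
    obtain ⟨y, hy, hA⟩ := ih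
    by_cases h1 : j0 ∈ Jset v c ∨ phiMap v y j0 ≠ (c j0 : ℝ)
    · refine ⟨y, hy, fun j hj hjJ => ?_⟩
      rcases Finset.mem_insert.mp hj with rfl | hjA
      · rcases h1 with h1 | h1
        · exact absurd h1 hjJ
        · exact h1
      · exact hA j hjA hjJ
    · push_neg at h1
      obtain ⟨hj0J, hy0⟩ := h1
      -- get a witness w with non-integral j0 pairing
      have hw : ∃ w, PhiMap v w = c ∧ ¬ ∃ m : ℤ, phiMap v w j0 = (m : ℝ) := by
        by_contra hcon
        push_neg at hcon
        exact hj0J (fun w hw => hcon w hw)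
      obtain ⟨w, hw, hwint⟩ := hw
      have hwne : phiMap v w j0 ≠ (c j0 : ℝ) := fun he => hwint ⟨c j0, he⟩
      -- bad parameter values
      set S : Fin k → Set ℝ := fun j =>
        {t : ℝ | j ∉ Jset v c ∧ (1 - t) * phiMap v y j + t * phiMap v w j = (c j : ℝ)} with hS
      have hfin : ∀ j ∈ insert j0 A, (S j).Finite := by
        intro j hj
        by_cases hjJ : j ∈ Jset v c
        · have : S j = ∅ := by ext t; simp [hS, hjJ]
          simp [this]
        · have hsub : S j ⊆ {t : ℝ | (1 - t) * phiMap v y j + t * phiMap v w j = (c j : ℝ)} :=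
            fun t ht => ht.2
          have hdisj : phiMap v y j ≠ (c j : ℝ) ∨ phiMap v w j ≠ (c j : ℝ) := by
            rcases Finset.mem_insert.mp hj with rfl | hjA
            · exact Or.inr hwne
            · exact Or.inl (hA j hjA hjJ)
          exact ((affine_subsingleton hdisj).finite).subset hsub
      have hBadfin : (⋃ j ∈ (insert j0 A : Finset (Fin k)), S j).Finite :=
        Set.Finite.biUnion (Finset.finite_toSet _) hfin
      have hinf : ((Set.Ioo (0:ℝ) 1) \ ⋃ j ∈ (insert j0 A : Finset (Fin k)), S j).Infinite :=
        (Set.Ioo_infinite (by norm_num : (0:ℝ) < 1)).diff hBadfin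
      obtain ⟨t, ht⟩ := hinf.nonempty
      obtain ⟨⟨ht0, ht1⟩, htB⟩ := ht
      refine ⟨(1 - t) • y + t • w, stratum_convex hy hw ht0.le ht1.le, ?_⟩
      intro j hj hjJ heq
      apply htB
      refine Set.mem_biUnion hj ?_
      rw [phi_comb] at heq
      exact ⟨hjJ, heq⟩

lemma face_step (v : Fin k → Fin n → ℤ) (x x' : Fin k → ℝ)
    (hx : ∀ j, x j ∈ Set.Ico (0:ℝ) 1) (hx' : ∀ j, x' j ∈ Set.Ico (0:ℝ) 1)
    (hz : ∀ j, x j = 0 → x' j = 0)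
    (F : Set ((Fin k → ℝ) ⧸ LinearMap.range (phiMap v)))
    (hF : IsExtreme ℝ
      ((LinearMap.range (phiMap v)).mkQ '' {z : Fin k → ℝ | ∀ j, z j ∈ Set.Ico (0:ℝ) 1}) F)
    (hxF : (LinearMap.range (phiMap v)).mkQ x ∈ F) :
    (LinearMap.range (phiMap v)).mkQ x' ∈ F := by
  classical
  set Q := (LinearMap.range (phiMap v)).mkQ with hQ
  -- choose ε > 0 with ε ≤ x j and ε ≤ 1 - x j whenever x j ≠ 0
  set g : Fin k → ℝ := fun j => if x j = 0 then 1 else min (x j) (1 - x j) with hg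
  set s : Finset ℝ := insert 1 (Finset.univ.image g) with hs
  have hsne : s.Nonempty := ⟨1, Finset.mem_insert_self _ _⟩
  set ε : ℝ := s.min' hsne with hε
  have hεpos : 0 < ε := by
    have hmem := s.min'_mem hsne
    rcases Finset.mem_insert.mp hmem with h | h
    · rw [hε, h]; norm_num
    · obtain ⟨j, _, hj⟩ := Finset.mem_image.mp h
      rw [hε, ← hj]
      show 0 < g j
      simp only [hg]
      by_cases h0 : x j = 0
      · simp [h0]
      · have hj2 := hx j
        have hxj : 0 < x j := lt_of_le_of_ne hj2.1 (Ne.symm h0)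
        simp only [if_neg h0, lt_min_iff]
        exact ⟨hxj, by linarith [hj2.2]⟩
  have hεle : ∀ j, x j ≠ 0 → ε ≤ x j ∧ ε ≤ 1 - x j := by
    intro j h0
    have hmem : g j ∈ s := Finset.mem_insert_of_mem (Finset.mem_image_of_mem g (Finset.mem_univ j))
    have h2 : ε ≤ g j := s.min'_le _ hmem
    simp only [hg, if_neg h0, le_min_iff] at h2
    exact ⟨h2.1, h2.2⟩
  set b : Fin k → ℝ := fun j => x j - ε * (x' j - x j) with hb
  have hbbox : ∀ j, b j ∈ Set.Ico (0:ℝ) 1 := by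
    intro j
    by_cases h0 : x j = 0
    · have := hz j h0
      simp [hb, h0, this]
    · obtain ⟨h1, h2⟩ := hεle j h0
      have hxj := hx j
      have hxj' := hx' j
      constructor
      · have t1 : 0 ≤ ε * (1 - x' j) := mul_nonneg hεpos.le (by linarith [hxj'.2])
        have t2 : 0 ≤ ε * x j := mul_nonneg hεpos.le hxj.1
        simp only [hb]
        nlinarith
      · have t1 : 0 ≤ ε * x' j := mul_nonneg hεpos.le hxj'.1
        have t2 : ε * x j < ε := by nlinarith [hxj.2]
        simp only [hb]
        nlinarith
  -- x is in the open segment between x' and b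
  have hkey : Q x ∈ openSegment ℝ (Q x') (Q b) := by
    refine ⟨ε / (1 + ε), 1 / (1 + ε), by positivity, by positivity, by field_simp; try ring, ?_⟩
    rw [← map_smul, ← map_smul, ← map_add]
    congr 1
    funext j
    simp only [Pi.add_apply, Pi.smul_apply, smul_eq_mul, hb]
    field_simp
    ring
  exact hF.2 ⟨x', hx', rfl⟩ ⟨b, hbbox, rfl⟩ hxF hkey

end Aux

/-- The minimal face of a set `C` containing `p`: the intersection of all extreme subsets of `C`
containing `p`. -/
def minFace {V : Type*} [AddCommGroup V] [Module ℝ V] (C : Set V) (p : V) : Set V :=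
  ⋂₀ {F : Set V | IsExtreme ℝ C F ∧ p ∈ F}

section Aux2
variable {n k : ℕ}

lemma minFace_eq {V : Type*} [AddCommGroup V] [Module ℝ V] {C : Set V} {p q : V}
    (hpq : ∀ F : Set V, IsExtreme ℝ C F → p ∈ F → q ∈ F)
    (hqp : ∀ F : Set V, IsExtreme ℝ C F → q ∈ F → p ∈ F) :
    minFace C p = minFace C q := by
  unfold minFace
  apply Set.Subset.antisymm <;> apply Set.sInter_subset_sInter <;> intro F hF
  · exact ⟨hF.1, hqp F hF.1 hF.2⟩
  · exact ⟨hF.1, hpq F hF.1 hF.2⟩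

lemma key_step (v : Fin k → Fin n → ℤ) (c c' : Fin k → ℤ)
    (hc : ({y : Fin n → ℝ | PhiMap v y = c}).Nonempty)
    (hc' : ({y : Fin n → ℝ | PhiMap v y = c'}).Nonempty)
    (hJ : Jset v c = Jset v c')
    (F : Set ((Fin k → ℝ) ⧸ LinearMap.range (phiMap v)))
    (hF : IsExtreme ℝ
      ((LinearMap.range (phiMap v)).mkQ '' {z : Fin k → ℝ | ∀ j, z j ∈ Set.Ico (0:ℝ) 1}) F)
    (hcF : (LinearMap.range (phiMap v)).mkQ (fun j => (c j : ℝ)) ∈ F) :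
    (LinearMap.range (phiMap v)).mkQ (fun j => (c' j : ℝ)) ∈ F := by
  obtain ⟨y, hy, hgen⟩ := exists_generic v c hc
  obtain ⟨y', hy'⟩ := hc'
  set x : Fin k → ℝ := fun j => (c j : ℝ) - phiMap v y j with hxdef
  set x' : Fin k → ℝ := fun j => (c' j : ℝ) - phiMap v y' j with hxdef'
  have hx : ∀ j, x j ∈ Set.Ico (0:ℝ) 1 := by
    intro j
    have := phi_mem hy j
    exact ⟨by simp only [hxdef]; linarith [this.2], by simp only [hxdef]; linarith [this.1]⟩
  have hx' : ∀ j, x' j ∈ Set.Ico (0:ℝ) 1 := by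
    intro j
    have := phi_mem hy' j
    exact ⟨by simp only [hxdef']; linarith [this.2], by simp only [hxdef']; linarith [this.1]⟩
  have hQc : (LinearMap.range (phiMap v)).mkQ (fun j => (c j : ℝ))
      = (LinearMap.range (phiMap v)).mkQ x := by
    rw [Submodule.mkQ_apply, Submodule.mkQ_apply, Submodule.Quotient.eq]
    exact ⟨y, by funext j; simp [hxdef, Pi.sub_apply]⟩
  have hQc' : (LinearMap.range (phiMap v)).mkQ (fun j => (c' j : ℝ))
      = (LinearMap.range (phiMap v)).mkQ x' := by
    rw [Submodule.mkQ_apply, Submodule.mkQ_apply, Submodule.Quotient.eq]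
    exact ⟨y', by funext j; simp [hxdef', Pi.sub_apply]⟩
  have hzero : ∀ j, x j = 0 → x' j = 0 := by
    intro j h0
    have hyj : phiMap v y j = (c j : ℝ) := by
      have : (c j : ℝ) - phiMap v y j = 0 := h0
      linarith
    have hjJ : j ∈ Jset v c := by
      by_contra hcon
      exact hgen j hcon hyj
    rw [hJ] at hjJ
    have hint : ∃ m : ℤ, phiMap v y' j = (m : ℝ) := hjJ y' hy'
    have := phi_int_eq hy' hint
    simp only [hxdef']
    linarith
  rw [hQc] at hcF
  rw [hQc']
  exact face_step v x x' hx hx' hzero F hF hcF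


end Aux2

/-- The minimal face corresponding to a `Φ`-stratum is entirely determined by its set `J`: if
`J_c = J_{c'}`, then the minimal faces of `Z` containing `π(c)` and `π(c')` coincide. -/
theorem stmt11 {n k : ℕ} (v : Fin k → Fin n → ℤ) (c c' : Fin k → ℤ)
    (hc : ({y : Fin n → ℝ | PhiMap v y = c}).Nonempty)
    (hc' : ({y : Fin n → ℝ | PhiMap v y = c'}).Nonempty)
    (hJ : Jset v c = Jset v c') :
    minFace ((LinearMap.range (phiMap v)).mkQ '' {x : Fin k → ℝ | ∀ j, x j ∈ Set.Ico (0 : ℝ) 1})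
        ((LinearMap.range (phiMap v)).mkQ (fun j => (c j : ℝ))) =
      minFace ((LinearMap.range (phiMap v)).mkQ '' {x : Fin k → ℝ | ∀ j, x j ∈ Set.Ico (0 : ℝ) 1})
        ((LinearMap.range (phiMap v)).mkQ (fun j => (c' j : ℝ))) := by
  exact minFace_eq
    (fun F hF hp => key_step v c c' hc hc' hJ F hF hp)
    (fun F hF hq => key_step v c' c hc' hc hJ.symm F hF hq)
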